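/- Let A and B be bounded periodic operators on ℋ = ℓ²(ℤ^d, ℂ^N). Then the trace per unit volume is cyclic on such operators: τ(AB) = τ(BA), i.e. Σ_{s=1}^N ⟨δ_0 e_s, A B δ_0 e_s⟩ = Σ_{s=1}^N ⟨δ_0 e_s, B A δ_0 e_s⟩. -/

import Mathlib

noncomputable section

/-- The lattice `ℤ^d`. -/
abbrev ZLat (d : ℕ) := Fin d → ℤ

/-- The Hilbert space `ℓ²(ℤ^d, ℂ^N)`. -/
abbrev Hilb (d N : ℕ) := lp (fun _ : ZLat d × Fin N => ℂ) 2

/-- The standard basis vector `δ_x e_s`. -/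
def delta {d N : ℕ} (x : ZLat d) (s : Fin N) : Hilb d N := lp.single 2 (x, s) 1

/-- `ψ ∈ ℓ²(ℤ^d, ℂ^N)` is finitely supported. -/
def FinSupp {d N : ℕ} (ψ : Hilb d N) : Prop := (Function.support fun p => ψ p).Finite

open scoped Classical in
/-- The position operator `X_j`, defined (with junk value `0` if the result fails to be
square-summable, which never happens for finitely supported `ψ`) by `(X_j ψ)(x) = x_j ψ(x)`. -/
def posOp {d N : ℕ} (j : Fin d) (ψ : Hilb d N) : Hilb d N :=
  if h : Memℓp (fun p : ZLat d × Fin N => (p.1 j : ℂ) * ψ p) 2 then ⟨_, h⟩ else 0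

/-- A bounded operator `A` on `ℓ²(ℤ^d, ℂ^N)` is periodic, i.e. commutes with all lattice
translations `T_γ`; equivalently, its matrix elements are invariant under simultaneous
translation of both indices. -/
def IsPeriodic {d N : ℕ} (A : Hilb d N →L[ℂ] Hilb d N) : Prop :=
  ∀ (γ x y : ZLat d) (s t : Fin N),
    (inner ℂ (delta (x + γ) s) (A (delta (y + γ) t)) : ℂ) = inner ℂ (delta x s) (A (delta y t))

/-- `K` is a bounded extension of the commutator `[A, X_j]`. -/
def IsCommExt {d N : ℕ} (A K : Hilb d N →L[ℂ] Hilb d N) (j : Fin d) : Prop :=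
  ∀ φ ψ : Hilb d N, FinSupp φ → FinSupp ψ →
    (inner ℂ φ (K ψ) : ℂ) = inner ℂ φ (A (posOp j ψ)) - inner ℂ (posOp j φ) (A ψ)

/-- The trace per unit volume of a bounded periodic operator:
`τ(A) = ∑_{s=1}^N ⟨δ_0 e_s, A δ_0 e_s⟩`. -/
def tau {d N : ℕ} (A : Hilb d N →L[ℂ] Hilb d N) : ℂ :=
  ∑ s : Fin N, inner ℂ (delta (0 : ZLat d) s) (A (delta 0 s))

/-- `H` has finite range `R`: matrix elements between sites at distance `> R` vanish. -/
def HasFiniteRange {d N : ℕ} (H : Hilb d N →L[ℂ] Hilb d N) (R : ℝ) : Prop :=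
  ∀ (x y : ZLat d) (s t : Fin N), R < ‖x - y‖ →
    (inner ℂ (delta x s) (H (delta y t)) : ℂ) = 0


/-- Reindexing equivalence used for cyclicity. -/
def flipEquiv (d N : ℕ) : (Fin N × (ZLat d × Fin N)) ≃ (Fin N × (ZLat d × Fin N)) :=
  { toFun := fun p => (p.2.2, (-p.2.1, p.1))
    invFun := fun p => (p.2.2, (-p.2.1, p.1))
    left_inv := fun p => by simp
    right_inv := fun p => by simp }

/-- The canonical Hilbert basis of `ℓ²(ℤ^d, ℂ^N)`. -/
def bb (d N : ℕ) : HilbertBasis (ZLat d × Fin N) ℂ (Hilb d N) := default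

lemma bb_eq {d N : ℕ} (i : ZLat d × Fin N) : bb d N i = delta i.1 i.2 := by
  rw [← HilbertBasis.repr_symm_single]; rfl

/-- Matrix-element family whose sum is `τ(AB)`. -/
def Fam {d N : ℕ} (A B : Hilb d N →L[ℂ] Hilb d N) (p : Fin N × (ZLat d × Fin N)) : ℂ :=
  (inner ℂ (delta (0:ZLat d) p.1) (A (delta p.2.1 p.2.2)) : ℂ) *
    inner ℂ (delta p.2.1 p.2.2) (B (delta 0 p.1))

lemma hasSum_fam {d N : ℕ} (A B : Hilb d N →L[ℂ] Hilb d N) (s : Fin N) :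
    HasSum (fun i : ZLat d × Fin N => Fam A B (s, i))
      (inner ℂ (delta (0:ZLat d) s) ((A * B) (delta 0 s)) : ℂ) := by
  have h := HilbertBasis.hasSum_inner_mul_inner (bb d N)
    (ContinuousLinearMap.adjoint A (delta (0:ZLat d) s)) (B (delta 0 s))
  rw [ContinuousLinearMap.adjoint_inner_left] at h
  convert h using 2 with i
  case e'_3 => rfl
  case e'_6.e'_3 => rfl
  case e'_6.e'_5 => rfl
  case e'_5 =>
    rw [Fam, bb_eq, ContinuousLinearMap.adjoint_inner_left]

lemma summable_fam {d N : ℕ} (A B : Hilb d N →L[ℂ] Hilb d N) :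
    Summable (Fam A B) := by
  rw [← summable_norm_iff]
  apply (summable_prod_of_nonneg (fun p => norm_nonneg _)).mpr
  constructor
  · intro s
    exact summable_norm_iff.mpr (hasSum_fam A B s).summable
  · exact Summable.of_finite

lemma tau_eq_tsum {d N : ℕ} (A B : Hilb d N →L[ℂ] Hilb d N) :
    tau (A * B) = ∑' p, Fam A B p := by
  rw [Summable.tsum_prod' (summable_fam A B) (fun s => (hasSum_fam A B s).summable), tau, tsum_fintype]
  exact Finset.sum_congr rfl fun s _ => ((hasSum_fam A B s).tsum_eq).symm

/-- cyclicity of the trace per unit volume.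
For bounded periodic operators `A`, `B` on `ℓ²(ℤ^d, ℂ^N)`, `τ(AB) = τ(BA)`. -/
theorem stmt_7 {d N : ℕ} (hd : 0 < d) (hN : 0 < N)
    (A B : Hilb d N →L[ℂ] Hilb d N) (hA : IsPeriodic A) (hB : IsPeriodic B) :
    tau (A * B) = tau (B * A) := by
  rw [tau_eq_tsum A B, tau_eq_tsum B A]
  rw [← (flipEquiv d N).tsum_eq (Fam B A)]
  congr 1
  funext p
  obtain ⟨s, y, t⟩ := p
  show (inner ℂ (delta (0:ZLat d) s) (A (delta y t)) : ℂ) * inner ℂ (delta y t) (B (delta 0 s))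
    = (inner ℂ (delta (0:ZLat d) t) (B (delta (-y) s)) : ℂ) * inner ℂ (delta (-y) s) (A (delta 0 t))
  have h1 : (inner ℂ (delta (0:ZLat d) s) (A (delta y t)) : ℂ)
      = inner ℂ (delta (-y) s) (A (delta 0 t)) := by
    have := hA y (-y) 0 s t
    rwa [neg_add_cancel, zero_add] at this
  have h2 : (inner ℂ (delta y t) (B (delta (0:ZLat d) s)) : ℂ)
      = inner ℂ (delta (0:ZLat d) t) (B (delta (-y) s)) := by
    have := hB (-y) y 0 t s
    rw [add_neg_cancel, zero_add] at this
    exact this.symm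
  rw [h1, h2, mul_comm]
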